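/- Let q be a prime power, m ≥ 1, r = q^m, and let γ be a primitive element of GF(r²). Let d = s(r-1) + Δ where gcd(Δ, (r-1)/(q-1)) = 1. Then the degree of the minimal polynomial of γ^{-d} over GF(q) equals m if Δ ≡ 2s (mod r+1), and equals 2m if Δ ≢ 2s (mod r+1). -/

import Mathlib

open Polynomial IntermediateField

lemma aux_gcd_pow_sub_one (q k m g : ℕ) (hq : 2 ≤ q) (hk : 1 ≤ k)
    (h1 : g ∣ q ^ k - 1) (h2 : g ∣ q ^ m - 1) : g ∣ q ^ Nat.gcd k m - 1 := by
  have hg0 : g ≠ 0 := by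
    rintro rfl
    have := Nat.eq_zero_of_zero_dvd h1
    have h1k : 1 < q ^ k := Nat.one_lt_pow (by omega) hq
    omega
  haveI : NeZero g := ⟨hg0⟩
  have cast1 : ∀ t : ℕ, g ∣ q ^ t - 1 → (q : ZMod g) ^ t = 1 := by
    intro t ht
    have h1t : 1 ≤ q ^ t := Nat.one_le_pow _ _ (by omega)
    have h0 : ((q ^ t - 1 : ℕ) : ZMod g) = 0 := (ZMod.natCast_eq_zero_iff _ _).mpr ht
    calc (q : ZMod g) ^ t = ((q ^ t : ℕ) : ZMod g) := by push_cast; ring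
      _ = ((q ^ t - 1 + 1 : ℕ) : ZMod g) := by rw [Nat.sub_add_cancel h1t]
      _ = 1 := by push_cast [h0]; ring
  have key := pow_gcd_eq_one.mpr ⟨cast1 k h1, cast1 m h2⟩
  have h1j : 1 ≤ q ^ Nat.gcd k m := Nat.one_le_pow _ _ (by omega)
  have : ((q ^ Nat.gcd k m - 1 : ℕ) : ZMod g) = 0 := by
    rw [Nat.cast_sub h1j]
    push_cast [key]
    ring
  exact (ZMod.natCast_eq_zero_iff _ _).mp this

lemma aux_keyNT (q m k : ℕ) (d Δ s : ℤ) (hq : 2 ≤ q) (hm : 1 ≤ m) (hk : 1 ≤ k)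
    (hd : d = s * ((q : ℤ) ^ m - 1) + Δ)
    (hΔ : Int.gcd Δ (((q ^ m - 1) / (q - 1) : ℕ) : ℤ) = 1)
    (hdvd : ((q : ℤ) ^ m - 1) ∣ d * ((q : ℤ) ^ k - 1)) : m ∣ k := by
  set A : ℕ := q ^ m - 1 with hA
  set B : ℕ := q ^ k - 1 with hB
  set j : ℕ := Nat.gcd k m with hj
  set b : ℕ := q ^ j - 1 with hb
  set g : ℕ := Nat.gcd B A with hg
  have h1A : 1 ≤ q ^ m := Nat.one_le_pow _ _ (by omega)
  have h1B : 1 ≤ q ^ k := Nat.one_le_pow _ _ (by omega)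
  have hj1 : 1 ≤ j := Nat.one_le_iff_ne_zero.mpr (Nat.gcd_ne_zero_left (by omega))
  have hqj : 2 ≤ q ^ j := hq.trans (Nat.le_self_pow (by omega) q)
  have hqk : 2 ≤ q ^ k := hq.trans (Nat.le_self_pow (by omega) q)
  have hqm : 2 ≤ q ^ m := hq.trans (Nat.le_self_pow (by omega) q)
  have hb1 : 1 ≤ b := by omega
  have hgpos : 0 < g := Nat.gcd_pos_of_pos_left _ (by omega)
  have hbA : b ∣ A := by
    have : q ^ j - 1 ∣ (q ^ j) ^ (m / j) - 1 ^ (m / j) := Nat.sub_dvd_pow_sub_pow _ _ _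
    rwa [one_pow, ← Nat.pow_mul, Nat.mul_div_cancel' (Nat.gcd_dvd_right k m)] at this
  have hq1b : q - 1 ∣ b := by
    have : q - 1 ∣ q ^ j - 1 ^ j := Nat.sub_dvd_pow_sub_pow _ _ _
    rwa [one_pow] at this
  have hAg : (((A / g : ℕ)) : ℤ) ∣ d := by
    have hgB : g ∣ B := Nat.gcd_dvd_left _ _
    have hgA : g ∣ A := Nat.gcd_dvd_right _ _
    have hcastA : ((A : ℕ) : ℤ) = (q : ℤ) ^ m - 1 := by push_cast [hA, h1A]; ring
    have hcastB : ((B : ℕ) : ℤ) = (q : ℤ) ^ k - 1 := by push_cast [hB, h1B]; ring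
    have hdvd' : (A : ℤ) ∣ d * (B : ℤ) := by rw [hcastA, hcastB]; exact hdvd
    have hA' : (A : ℤ) = (g : ℤ) * ((A / g : ℕ) : ℤ) := by
      rw [← Nat.cast_mul, Nat.mul_div_cancel' hgA]
    have hB' : (B : ℤ) = (g : ℤ) * ((B / g : ℕ) : ℤ) := by
      rw [← Nat.cast_mul, Nat.mul_div_cancel' hgB]
    rw [hA', hB'] at hdvd'
    have hdvd2 : ((A / g : ℕ) : ℤ) ∣ d * ((B / g : ℕ) : ℤ) := by
      have hg0 : (g : ℤ) ≠ 0 := by exact_mod_cast hgpos.ne'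
      rw [show d * ((g : ℤ) * ((B / g : ℕ) : ℤ)) = (g : ℤ) * (d * ((B / g : ℕ) : ℤ)) by ring]
        at hdvd'
      exact (mul_dvd_mul_iff_left hg0).mp hdvd'
    have hcop : IsCoprime ((A / g : ℕ) : ℤ) ((B / g : ℕ) : ℤ) := by
      rw [Int.isCoprime_iff_gcd_eq_one, Int.gcd_natCast_natCast]
      exact Nat.Coprime.symm (Nat.coprime_div_gcd_div_gcd hgpos)
    exact hcop.dvd_of_dvd_mul_right hdvd2
  have hgb : g ∣ b := by
    have h := aux_gcd_pow_sub_one q k m g hq hk (Nat.gcd_dvd_left _ _) (Nat.gcd_dvd_right _ _)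
    rw [← hj, ← hb] at h
    exact h
  set c : ℕ := A / b with hc
  have hbc : A = b * c := (Nat.mul_div_cancel' hbA).symm
  have hcAg : c ∣ A / g := by
    have : A / g = (b / g) * c := by
      rw [hbc, mul_comm b c, Nat.mul_div_assoc c hgb, mul_comm]
    rw [this]; exact Dvd.intro_left _ rfl
  have hcd : (c : ℤ) ∣ d := dvd_trans (by exact_mod_cast Nat.cast_dvd_cast hcAg) hAg
  have hcΔ : (c : ℤ) ∣ Δ := by
    have hcA : (c : ℤ) ∣ ((A : ℕ) : ℤ) := Int.natCast_dvd_natCast.mpr ⟨b, by rw [hbc]; ring⟩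
    have hcastA : ((A : ℕ) : ℤ) = (q : ℤ) ^ m - 1 := by push_cast [hA, h1A]; ring
    have : Δ = d - s * ((A : ℕ) : ℤ) := by rw [hcastA]; omega
    rw [this]
    exact dvd_sub hcd (Dvd.dvd.mul_left (hcastA ▸ hcA) s)
  have hcq1 : c ∣ A / (q - 1) := by
    have : A / (q - 1) = (b / (q - 1)) * c := by
      rw [hbc, mul_comm b c, Nat.mul_div_assoc c hq1b, mul_comm]
    rw [this]; exact Dvd.intro_left _ rfl
  have hc1 : c = 1 := by
    have h1 : (c : ℤ) ∣ Int.gcd Δ (((A / (q - 1) : ℕ)) : ℤ) :=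
      Int.dvd_coe_gcd hcΔ (Int.natCast_dvd_natCast.mpr hcq1)
    rw [hΔ] at h1
    exact Nat.eq_one_of_dvd_one (by exact_mod_cast h1)
  rw [hc1, mul_one] at hbc
  have : q ^ m = q ^ j := by omega
  have hmj : m = j := Nat.pow_right_injective hq this
  rw [hmj]
  exact Nat.gcd_dvd_left k m

lemma aux_pow_iff (L : Type) [Field L] (γ : Lˣ) (N : ℕ) (hγ : orderOf γ = N) (d : ℤ) (q k : ℕ) :
    ((γ ^ (-d) : Lˣ) : L) ^ q ^ k = ((γ ^ (-d) : Lˣ) : L) ↔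
      (N : ℤ) ∣ d * ((q : ℤ) ^ k - 1) := by
  rw [← Units.val_pow_eq_pow_val]
  rw [show ((γ ^ (-d)) ^ q ^ k : Lˣ) = γ ^ (-d * ((q : ℤ) ^ k)) by
    rw [← zpow_natCast (γ ^ (-d)) (q ^ k), ← zpow_mul]; push_cast; ring_nf]
  constructor
  · intro h
    have h' : γ ^ (-d * ((q : ℤ) ^ k)) = γ ^ (-d) := Units.ext h
    have := orderOf_dvd_sub_iff_zpow_eq_zpow.mpr h'
    rw [hγ] at this
    have : (N : ℤ) ∣ -(d * ((q : ℤ) ^ k - 1)) := by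
      convert this using 1; ring
    exact (dvd_neg).mp this
  · intro h
    have h' : (orderOf γ : ℤ) ∣ (-d * ((q : ℤ) ^ k)) - (-d) := by
      rw [hγ]
      have : (N : ℤ) ∣ -(d * ((q : ℤ) ^ k - 1)) := dvd_neg.mpr h
      convert this using 1; ring
    have := orderOf_dvd_sub_iff_zpow_eq_zpow.mp h'
    exact congrArg Units.val this

lemma aux_le (p l m q : ℕ) (hp : p.Prime) (hq : q = p ^ l) (hl : 1 ≤ l) (hm : 1 ≤ m)
    (K L : Type) [Field K] [Field L] [Fintype K] [Fintype L] [Algebra K L]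
    (hK : Fintype.card K = q) (hL : Fintype.card L = (q ^ m) ^ 2)
    (α : L) (hα : α ^ q ^ m = α) (n : ℕ)
    [Fintype (IntermediateField.adjoin K {α} : IntermediateField K L)]
    (hcardF : Fintype.card (IntermediateField.adjoin K {α} : IntermediateField K L) = q ^ n) :
    n ≤ m := by
  haveI : Fact p.Prime := ⟨hp⟩
  haveI : DecidableEq L := Classical.decEq L
  have hq2 : 2 ≤ q := by
    rw [hq]; calc 2 ≤ p := hp.two_le
    _ ≤ p ^ l := Nat.le_self_pow (by omega) p
  haveI hcharL : CharP L p := by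
    obtain ⟨ν, hcprime, hcard⟩ := FiniteField.card L (ringChar L)
    have hrc : ringChar L = p := by
      have h1 : ringChar L ∣ p ^ (l * (m * 2)) := by
        have : ringChar L ∣ ringChar L ^ (ν : ℕ) := dvd_pow_self _ (by positivity)
        rw [← hcard, hL, hq, ← pow_mul, ← pow_mul] at this
        exact this
      exact (Nat.prime_dvd_prime_iff_eq hcprime hp).mp (hcprime.dvd_of_dvd_pow h1)
    exact hrc ▸ ringChar.charP L
  have hqm : q ^ m = p ^ (l * m) := by rw [hq, ← pow_mul]
  set E : Subfield L := RingHom.eqLocusField (iterateFrobenius L p (l * m)) (RingHom.id L)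
    with hE
  have hmemE : ∀ x : L, x ∈ E ↔ x ^ q ^ m = x := by
    intro x
    constructor
    · intro hx
      have : iterateFrobenius L p (l * m) x = x := hx
      rwa [iterateFrobenius_def, ← hqm] at this
    · intro hx
      show iterateFrobenius L p (l * m) x = x
      rwa [iterateFrobenius_def, ← hqm]
  set E' : IntermediateField K L := E.toIntermediateField (fun x => by
    rw [hmemE, ← map_pow]
    congr 1
    calc x ^ q ^ m = x ^ (Fintype.card K) ^ m := by rw [hK]
    _ = x := FiniteField.pow_card_pow m x) with hE'
  have hαE' : α ∈ E' := by
    show α ∈ E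
    exact (hmemE α).mpr hα
  have hle : IntermediateField.adjoin K {α} ≤ E' := by
    rw [IntermediateField.adjoin_le_iff]
    intro y hy
    rw [Set.mem_singleton_iff] at hy
    rw [hy]
    exact hαE'
  haveI : Fintype E' := Fintype.ofFinite _
  have hcard1 : Fintype.card (IntermediateField.adjoin K {α} : IntermediateField K L)
      ≤ Fintype.card E' :=
    Fintype.card_le_of_injective (fun x => ⟨x.1, hle x.2⟩) (by
      intro x y hxy
      simp only [Subtype.mk.injEq] at hxy
      exact Subtype.ext hxy)
  set P : L[X] := X ^ q ^ m - X with hP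
  have hPdeg : P.natDegree = q ^ m :=
    FiniteField.X_pow_card_pow_sub_X_natDegree_eq L (by omega) hq2
  have hPne : P ≠ 0 := FiniteField.X_pow_card_pow_sub_X_ne_zero L (by omega) hq2
  have hcard2 : Fintype.card E' ≤ q ^ m := by
    have hmem : ∀ x : E', (x : L) ∈ P.roots.toFinset := by
      intro x
      rw [Multiset.mem_toFinset, mem_roots hPne]
      simp only [IsRoot, hP, eval_sub, eval_pow, eval_X]
      have hx := (hmemE x.1).mp x.2
      rw [hx]; ring
    have hinj : Function.Injective
        (fun x : E' => (⟨x.1, hmem x⟩ : {z // z ∈ P.roots.toFinset})) := by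
      intro x y hxy
      simp only [Subtype.mk.injEq] at hxy
      exact Subtype.ext hxy
    calc Fintype.card E' ≤ Fintype.card {z // z ∈ P.roots.toFinset} :=
          Fintype.card_le_of_injective _ hinj
    _ = P.roots.toFinset.card := Fintype.card_coe _
    _ ≤ Multiset.card P.roots := P.roots.toFinset_card_le
    _ ≤ P.natDegree := P.card_roots'
    _ = q ^ m := hPdeg
  have : q ^ n ≤ q ^ m := by rw [← hcardF]; exact hcard1.trans hcard2
  exact (Nat.pow_le_pow_iff_right hq2).mp this

/-- Degree of the minimal polynomial of `γ^{-d}` over `GF(q)`, where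
`γ` is a primitive element of `GF(r²)`, `r = q^m`, `d = s(r-1) + Δ`
and `gcd(Δ, (r-1)/(q-1)) = 1`: it is `m` if `Δ ≡ 2s (mod r+1)` and
`2m` otherwise. -/
theorem stmt2 (p l q m r : ℕ) (hp : p.Prime) (hl : 1 ≤ l) (hq : q = p ^ l)
    (hm : 1 ≤ m) (hr : r = q ^ m)
    (K L : Type) [Field K] [Field L] [Fintype K] [Fintype L] [Algebra K L]
    (hK : Fintype.card K = q) (hL : Fintype.card L = r ^ 2)
    (γ : Lˣ) (hγ : orderOf γ = r ^ 2 - 1)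
    (s Δ d : ℤ) (hΔ : Int.gcd Δ ((r - 1) / (q - 1)) = 1)
    (hd : d = s * ((r : ℤ) - 1) + Δ) :
    (minpoly K ((γ ^ (-d) : Lˣ) : L)).natDegree =
      if (Δ : ZMod (r + 1)) = 2 * (s : ZMod (r + 1)) then m else 2 * m := by
  haveI : Fact p.Prime := ⟨hp⟩
  have hq2 : 2 ≤ q := by
    rw [hq]; calc 2 ≤ p := hp.two_le
    _ ≤ p ^ l := Nat.le_self_pow (by omega) p
  have hr2 : 2 ≤ r := by
    rw [hr]; exact hq2.trans (Nat.le_self_pow (by omega) q)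
  have hr21 : 1 ≤ r ^ 2 := Nat.one_le_pow _ _ (by omega)
  set α : L := ((γ ^ (-d) : Lˣ) : L) with hα
  haveI : FiniteDimensional K L := Module.Finite.of_finite
  have hint : IsIntegral K α := IsIntegral.of_finite K α
  set n : ℕ := (minpoly K α).natDegree with hn
  have hn_pos : 0 < n := minpoly.natDegree_pos hint
  -- finrank K L = 2 * m
  have hfrank : Module.finrank K L = 2 * m := by
    have h3 := Module.card_eq_pow_finrank (K := K) (V := L)
    rw [hK, hL, hr, ← pow_mul] at h3
    exact (Nat.pow_right_injective hq2 h3.symm).trans (mul_comm m 2)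
  have hn_dvd : n ∣ 2 * m := hfrank ▸ minpoly.degree_dvd hint
  -- the basic iff
  have hiff := aux_pow_iff L γ (r ^ 2 - 1) hγ d q
  -- cast facts
  have hNcast : (((r ^ 2 - 1 : ℕ)) : ℤ) = ((q : ℤ) ^ m - 1) * ((q : ℤ) ^ m + 1) := by
    rw [Nat.cast_sub hr21, hr]
    push_cast
    ring
  have hrq : (r : ℤ) = (q : ℤ) ^ m := by rw [hr]; push_cast; ring
  have hd' : d = s * ((q : ℤ) ^ m - 1) + Δ := by rw [hd, hrq]
  have hΔ' : Int.gcd Δ (((q ^ m - 1) / (q - 1) : ℕ) : ℤ) = 1 := by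
    rw [← hr, show (((r - 1) / (q - 1) : ℕ) : ℤ) = ((r - 1 : ℕ) : ℤ) / ((q - 1 : ℕ) : ℤ) from
      by exact_mod_cast Int.natCast_ediv _ _, Nat.cast_sub (by omega), Nat.cast_sub (by omega)]
    push_cast
    exact hΔ
  -- minpoly degree n satisfies α ^ q ^ n = α
  have hFfin : Fintype (IntermediateField.adjoin K {α} : IntermediateField K L) :=
    Fintype.ofFinite _
  have hcardF : Fintype.card (IntermediateField.adjoin K {α} : IntermediateField K L)
      = q ^ n := by
    have h5 := Module.card_eq_pow_finrank (K := K)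
      (V := (IntermediateField.adjoin K {α} : IntermediateField K L))
    rw [hK, adjoin.finrank hint] at h5
    exact h5
  have hpow_n : α ^ q ^ n = α := by
    have h6 : α ∈ (IntermediateField.adjoin K {α} : IntermediateField K L) :=
      mem_adjoin_simple_self K α
    have h7 : (⟨α, h6⟩ : (IntermediateField.adjoin K {α} : IntermediateField K L))
        ^ (Fintype.card (IntermediateField.adjoin K {α} : IntermediateField K L))
        = ⟨α, h6⟩ := FiniteField.pow_card _
    have h8 := congrArg Subtype.val h7
    push_cast at h8
    rw [hcardF] at h8
    exact h8
  have hC_n : ((r ^ 2 - 1 : ℕ) : ℤ) ∣ d * ((q : ℤ) ^ n - 1) := (hiff n).mp hpow_n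
  -- m ∣ n
  have hm_dvd_n : m ∣ n := by
    refine aux_keyNT q m n d Δ s hq2 hm hn_pos hd' hΔ' ?_
    refine dvd_trans ?_ hC_n
    rw [hNcast]
    exact dvd_mul_right _ _
  -- bridge
  have hr1z : ((r : ℕ) : ZMod (r + 1)) = -1 := by
    have h9 : ((r + 1 : ℕ) : ZMod (r + 1)) = 0 := ZMod.natCast_self _
    push_cast at h9
    linear_combination h9
  have hdz : ((d : ℤ) : ZMod (r + 1)) = (Δ : ZMod (r + 1)) - 2 * (s : ZMod (r + 1)) := by
    rw [hd]
    push_cast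
    rw [hr1z]
    ring
  have hbridge : ((r : ℤ) + 1) ∣ d ↔ (Δ : ZMod (r + 1)) = 2 * (s : ZMod (r + 1)) := by
    rw [show (r : ℤ) + 1 = ((r + 1 : ℕ) : ℤ) by push_cast; ring,
      ← ZMod.intCast_zmod_eq_zero_iff_dvd, hdz, sub_eq_zero]
  by_cases hcond : (Δ : ZMod (r + 1)) = 2 * (s : ZMod (r + 1))
  · -- case A : degree = m
    rw [if_pos hcond]
    obtain ⟨e, he⟩ := hbridge.mpr hcond
    have hCm : ((r ^ 2 - 1 : ℕ) : ℤ) ∣ d * ((q : ℤ) ^ m - 1) := by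
      rw [hNcast, he, ← hrq]
      exact ⟨e, by ring⟩
    have hpow_m : α ^ q ^ m = α := (hiff m).mpr hCm
    have hL' : Fintype.card L = (q ^ m) ^ 2 := by rw [hL, hr]
    have hle := aux_le p l m q hp hq hl hm K L hK hL' α hpow_m n hcardF
    exact le_antisymm hle (Nat.le_of_dvd hn_pos hm_dvd_n)
  · -- case B : degree = 2m
    rw [if_neg hcond]
    obtain ⟨u, hu⟩ := hm_dvd_n
    have hu2 : u ∣ 2 := by
      have : m * u ∣ m * 2 := by rw [← hu, mul_comm m 2]; exact hn_dvd
      exact (mul_dvd_mul_iff_left (by omega : m ≠ 0)).mp this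
    rcases (Nat.prime_two).eq_one_or_self_of_dvd u hu2 with hu1 | hu1
    · -- u = 1 leads to contradiction
      exfalso
      rw [hu1, mul_one] at hu
      have hC_m : ((r ^ 2 - 1 : ℕ) : ℤ) ∣ d * ((q : ℤ) ^ m - 1) := by
        rw [← hu]; exact hC_n
      rw [hNcast, ← hrq] at hC_m
      have hcancel : ((r : ℤ) + 1) ∣ d := by
        have h10 : ((r : ℤ) - 1) * (((r : ℤ) + 1)) ∣ ((r : ℤ) - 1) * d := by
          have : ((r : ℤ) - 1) * ((r : ℤ) + 1) ∣ d * ((r : ℤ) - 1) := hC_m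
          rw [mul_comm d _] at this
          exact this
        have hr1ne : ((r : ℤ) - 1) ≠ 0 := by
          have : (2 : ℤ) ≤ (r : ℤ) := by exact_mod_cast hr2
          omega
        exact (mul_dvd_mul_iff_left hr1ne).mp h10
      exact hcond (hbridge.mp hcancel)
    · rw [hu1] at hu
      rw [hu, mul_comm]
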